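/- The variance of the general MFMC estimator (with target level t = 0) equals \sigma_0^2/n^0 + \sum_{i=1}^q (1/n^{i-1} - 1/n^i)( (c^i)^2 \sigma_i^2 - 2 c^i \sigma_{0,i} ), under a nested coupling of samples across fidelity levels where the first n^{i-1} samples used at level i coincide (in joint distribution with level 0) and the remaining are independent extensions. -/

import Mathlib

open MeasureTheory ProbabilityTheory

/-- Covariance of two real random variables. -/
noncomputable def covar {Ω : Type*} [MeasurableSpace Ω] (μ : Measure Ω) (X Y : Ω → ℝ) : ℝ :=
  ∫ ω, (X ω - ∫ x, X x ∂μ) * (Y ω - ∫ x, Y x ∂μ) ∂μ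

section Aux

variable {Ω : Type*} [MeasurableSpace Ω] {μ : Measure Ω}

lemma MFMC.mul_int [IsProbabilityMeasure μ] (f g : Ω → ℝ) (hf : MemLp f 2 μ) (hg : MemLp g 2 μ) :
    Integrable (fun ω => f ω * g ω) μ := by
  have h : MemLp (f • g) 1 μ := hg.smul hf
  exact h.integrable le_rfl

lemma MFMC.covar_comm (X Y : Ω → ℝ) : covar μ X Y = covar μ Y X := by
  unfold covar
  have : ∀ ω, (X ω - ∫ x, X x ∂μ) * (Y ω - ∫ x, Y x ∂μ)
      = (Y ω - ∫ x, Y x ∂μ) * (X ω - ∫ x, X x ∂μ) := fun ω => mul_comm _ _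
  simp_rw [this]

lemma MFMC.covar_const_mul (a b : ℝ) (X Y : Ω → ℝ) :
    covar μ (fun ω => a * X ω) (fun ω => b * Y ω) = a * b * covar μ X Y := by
  unfold covar
  rw [integral_const_mul, integral_const_mul]
  have : ∀ ω, (a * X ω - a * ∫ x, X x ∂μ) * (b * Y ω - b * ∫ x, Y x ∂μ)
      = a * b * ((X ω - ∫ x, X x ∂μ) * (Y ω - ∫ x, Y x ∂μ)) := fun ω => by ring
  simp_rw [this, integral_const_mul]

lemma MFMC.covar_self [IsProbabilityMeasure μ] (X : Ω → ℝ) (hX : MemLp X 2 μ) :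
    covar μ X X = variance X μ := by
  rw [variance_eq_integral hX.aemeasurable]
  unfold covar
  simp_rw [sq]

lemma MFMC.variance_finsum [IsProbabilityMeasure μ] {ι : Type*} (s : Finset ι) (X : ι → Ω → ℝ)
    (h : ∀ i ∈ s, MemLp (X i) 2 μ) :
    variance (fun ω => ∑ i ∈ s, X i ω) μ = ∑ i ∈ s, ∑ k ∈ s, covar μ (X i) (X k) := by
  have hsum : MemLp (fun ω => ∑ i ∈ s, X i ω) 2 μ := by
    have h2 := memLp_finset_sum' s h
    have h3 : (∑ i ∈ s, X i) = fun ω => ∑ i ∈ s, X i ω := by funext ω; simp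
    rwa [h3] at h2
  have hint : ∀ i ∈ s, Integrable (X i) μ := fun i hi => (h i hi).integrable one_le_two
  have hC : ∀ i ∈ s, MemLp (fun ω => X i ω - ∫ x, X i x ∂μ) 2 μ := fun i hi =>
    (h i hi).sub (memLp_const _)
  rw [variance_eq_integral hsum.aemeasurable]
  have hmean : ∫ x, (∑ i ∈ s, X i x) ∂μ = ∑ i ∈ s, ∫ x, X i x ∂μ :=
    integral_finset_sum s hint
  simp_rw [hmean, sq, ← Finset.sum_sub_distrib, Finset.sum_mul_sum]
  rw [integral_finset_sum s (fun i hi => integrable_finset_sum s (fun k hk =>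
    MFMC.mul_int _ _ (hC i hi) (hC k hk)))]
  refine Finset.sum_congr rfl fun i hi => ?_
  rw [integral_finset_sum s (fun k hk => MFMC.mul_int _ _ (hC i hi) (hC k hk))]
  rfl

lemma MFMC.range_succ_split (q : ℕ) (g : ℕ → ℝ) :
    ∑ i ∈ Finset.range (q+1), g i = g 0 + ∑ i ∈ Finset.Icc 1 q, g i := by
  have h : Finset.range (q+1) = insert 0 (Finset.Icc 1 q) := by
    ext x; simp [Finset.mem_range, Finset.mem_Icc]; omega
  rw [h, Finset.sum_insert (by simp)]

lemma MFMC.sum_if_const (N m : ℕ) (x : ℝ) (h : m ≤ N) :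
    ∑ j ∈ Finset.range N, (if j < m then x else 0) = m * x := by
  have hf : Finset.filter (fun x => x < m) (Finset.range N) = Finset.range m := by
    ext x; simp [Finset.mem_range]; omega
  rw [Finset.sum_ite, Finset.sum_const, Finset.sum_const_zero, add_zero, nsmul_eq_mul,
    hf, Finset.card_range]

lemma MFMC.sum_if_mul (N m : ℕ) (x : ℝ) (g : ℕ → ℝ) (h : m ≤ N) :
    ∑ j ∈ Finset.range N, (if j < m then x else 0) * g j = x * ∑ j ∈ Finset.range m, g j := by
  rw [Finset.mul_sum]
  rw [← Finset.sum_subset (Finset.range_subset_range.2 h)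
    (fun j _ hj => by
      have : ¬ j < m := fun hlt => hj (Finset.mem_range.2 hlt)
      simp [this])]
  exact Finset.sum_congr rfl fun j hj => by simp [Finset.mem_range.1 hj]

lemma MFMC.double_split (q : ℕ) (D : ℕ → ℕ → ℝ)
    (hoff : ∀ i k, 1 ≤ i → 1 ≤ k → i ≤ q → k ≤ q → i ≠ k → D i k = 0) :
    ∑ i ∈ Finset.range (q+1), ∑ k ∈ Finset.range (q+1), D i k
      = D 0 0 + ∑ i ∈ Finset.Icc 1 q, (D i i + D 0 i + D i 0) := by
  rw [MFMC.range_succ_split q (fun i => ∑ k ∈ Finset.range (q+1), D i k),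
    MFMC.range_succ_split q (fun k => D 0 k)]
  have h1 : ∀ i ∈ Finset.Icc 1 q, ∑ k ∈ Finset.range (q+1), D i k = D i 0 + D i i := by
    intro i hi
    rw [MFMC.range_succ_split q (fun k => D i k)]
    congr 1
    refine Finset.sum_eq_single_of_mem i hi (fun k hk hki => ?_)
    simp only [Finset.mem_Icc] at hi hk
    exact hoff i k hi.1 hk.1 hi.2 hk.2 (Ne.symm hki)
  rw [Finset.sum_congr rfl h1]
  simp only [Finset.sum_add_distrib]
  ring

end Aux

/-- Coefficient of `F i j` in the MFMC estimator. -/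
noncomputable def MFMC.coeffA (n : ℕ → ℕ) (c : ℕ → ℝ) : ℕ → ℕ → ℝ := fun i j =>
  if i = 0 then (if j < n 0 then (n 0 : ℝ)⁻¹ else 0)
  else c i * ((if j < n i then (n i : ℝ)⁻¹ else 0) - (if j < n (i-1) then (n (i-1) : ℝ)⁻¹ else 0))

/-- variance of the general MFMC estimator (target level 0) under the
nested coupling of samples across fidelity levels. -/
theorem mfmc_variance
    {Ω : Type*} [MeasurableSpace Ω] (μ : Measure Ω) [IsProbabilityMeasure μ]
    (q : ℕ) (hq : 1 ≤ q) (n : ℕ → ℕ) (hn : 0 < n 0)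
    (hmono : ∀ i, i < q → n i ≤ n (i + 1))
    (F : ℕ → ℕ → Ω → ℝ) (c : ℕ → ℝ) (σsq σ0i : ℕ → ℝ)
    (hL2 : ∀ i j, MemLp (F i j) 2 μ)
    (hvar : ∀ i j, variance (F i j) μ = σsq i)
    (hcov0 : ∀ i, 1 ≤ i → i ≤ q → ∀ j < n 0, covar μ (F 0 j) (F i j) = σ0i i)
    (hindidx : ∀ i k j l, j ≠ l → covar μ (F i j) (F k l) = 0)
    (hindlvl : ∀ i k, 1 ≤ i → 1 ≤ k → i ≠ k → ∀ j, covar μ (F i j) (F k j) = 0) :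
    variance (fun ω =>
        (n 0 : ℝ)⁻¹ * ∑ j ∈ Finset.range (n 0), F 0 j ω
          + ∑ i ∈ Finset.Icc 1 q, c i *
              ((n i : ℝ)⁻¹ * ∑ j ∈ Finset.range (n i), F i j ω
                - (n (i - 1) : ℝ)⁻¹ * ∑ j ∈ Finset.range (n (i - 1)), F i j ω)) μ
      = σsq 0 / n 0
        + ∑ i ∈ Finset.Icc 1 q,
            (1 / (n (i - 1) : ℝ) - 1 / n i) * ((c i) ^ 2 * σsq i - 2 * c i * σ0i i) := by
  classical
  have hmono' : ∀ k, k ≤ q → ∀ i, i ≤ k → n i ≤ n k := by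
    intro k
    induction k with
    | zero => intro _ i hi; interval_cases i; exact le_rfl
    | succ k ih =>
      intro hk i hi
      rcases Nat.lt_or_ge i (k+1) with h | h
      · exact le_trans (ih (by omega) i (by omega)) (hmono k (by omega))
      · have : i = k + 1 := by omega
        subst this; exact le_rfl
  have hleN : ∀ i, i ≤ q → n i ≤ n q := fun i hi => hmono' q le_rfl i hi
  have hpos : ∀ i, i ≤ q → 0 < n i := fun i hi =>
    lt_of_lt_of_le hn (hmono' i hi 0 (Nat.zero_le _))
  set N := n q with hN
  set a := MFMC.coeffA n c with ha
  set s : Finset (ℕ × ℕ) := (Finset.range (q+1)) ×ˢ Finset.range N with hs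
  -- representation of the estimator as a single sum
  have hrepr : (fun ω =>
        (n 0 : ℝ)⁻¹ * ∑ j ∈ Finset.range (n 0), F 0 j ω
          + ∑ i ∈ Finset.Icc 1 q, c i *
              ((n i : ℝ)⁻¹ * ∑ j ∈ Finset.range (n i), F i j ω
                - (n (i - 1) : ℝ)⁻¹ * ∑ j ∈ Finset.range (n (i - 1)), F i j ω))
      = fun ω => ∑ p ∈ s, a p.1 p.2 * F p.1 p.2 ω := by
    funext ω
    rw [hs, Finset.sum_product,
      MFMC.range_succ_split q (fun i => ∑ j ∈ Finset.range N, a i j * F i j ω)]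
    congr 1
    · have h0 : ∀ j ∈ Finset.range N, a 0 j * F 0 j ω
          = (if j < n 0 then (n 0 : ℝ)⁻¹ else 0) * F 0 j ω := fun j _ => by
        simp [ha, MFMC.coeffA]
      rw [Finset.sum_congr rfl h0, MFMC.sum_if_mul N (n 0) _ _ (hleN 0 (by omega))]
    · refine Finset.sum_congr rfl fun i hi => ?_
      simp only [Finset.mem_Icc] at hi
      have hi0 : i ≠ 0 := by omega
      have hstep : ∀ j ∈ Finset.range N, a i j * F i j ω
          = (if j < n i then (n i : ℝ)⁻¹ else 0) * (c i * F i j ω)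
            - (if j < n (i-1) then (n (i-1) : ℝ)⁻¹ else 0) * (c i * F i j ω) := fun j _ => by
        simp only [ha, MFMC.coeffA, if_neg hi0]
        ring
      rw [Finset.sum_congr rfl hstep, Finset.sum_sub_distrib,
        MFMC.sum_if_mul N (n i) _ _ (hleN i hi.2),
        MFMC.sum_if_mul N (n (i-1)) _ _ (hleN (i-1) (by omega)),
        ← Finset.mul_sum, ← Finset.mul_sum]
      ring
  rw [hrepr]
  have hX : ∀ p ∈ s, MemLp (fun ω => a p.1 p.2 * F p.1 p.2 ω) 2 μ :=
    fun p _ => (hL2 p.1 p.2).const_mul _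
  rw [MFMC.variance_finsum s (fun p ω => a p.1 p.2 * F p.1 p.2 ω) hX]
  -- reduce to double sum over levels
  have step1 : ∑ p ∈ s, ∑ r ∈ s, covar μ (fun ω => a p.1 p.2 * F p.1 p.2 ω)
        (fun ω => a r.1 r.2 * F r.1 r.2 ω)
      = ∑ i ∈ Finset.range (q+1), ∑ j ∈ Finset.range N,
          ∑ k ∈ Finset.range (q+1), ∑ l ∈ Finset.range N,
            a i j * a k l * covar μ (F i j) (F k l) := by
    rw [hs, Finset.sum_product]
    refine Finset.sum_congr rfl fun i _ => ?_
    refine Finset.sum_congr rfl fun j _ => ?_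
    rw [Finset.sum_product]
    refine Finset.sum_congr rfl fun k _ => ?_
    refine Finset.sum_congr rfl fun l _ => ?_
    exact MFMC.covar_const_mul _ _ _ _
  have step2 : ∑ i ∈ Finset.range (q+1), ∑ j ∈ Finset.range N,
          ∑ k ∈ Finset.range (q+1), ∑ l ∈ Finset.range N,
            a i j * a k l * covar μ (F i j) (F k l)
      = ∑ i ∈ Finset.range (q+1), ∑ k ∈ Finset.range (q+1),
          ∑ j ∈ Finset.range N, a i j * a k j * covar μ (F i j) (F k j) := by
    refine Finset.sum_congr rfl fun i _ => ?_
    have hcol : ∀ j ∈ Finset.range N, ∀ k ∈ Finset.range (q+1),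
        ∑ l ∈ Finset.range N, a i j * a k l * covar μ (F i j) (F k l)
          = a i j * a k j * covar μ (F i j) (F k j) := by
      intro j hj k _
      exact Finset.sum_eq_single_of_mem j hj (fun l _ hlj => by
        rw [hindidx i k j l (Ne.symm hlj), mul_zero])
    calc ∑ j ∈ Finset.range N, ∑ k ∈ Finset.range (q+1), ∑ l ∈ Finset.range N,
            a i j * a k l * covar μ (F i j) (F k l)
        = ∑ j ∈ Finset.range N, ∑ k ∈ Finset.range (q+1),
            a i j * a k j * covar μ (F i j) (F k j) := by
          refine Finset.sum_congr rfl fun j hj => Finset.sum_congr rfl fun k hk => ?_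
          exact hcol j hj k hk
      _ = ∑ k ∈ Finset.range (q+1), ∑ j ∈ Finset.range N,
            a i j * a k j * covar μ (F i j) (F k j) := Finset.sum_comm
  rw [step1, step2]
  rw [MFMC.double_split q (fun i k => ∑ j ∈ Finset.range N, a i j * a k j * covar μ (F i j) (F k j))
    (fun i k hi1 hk1 hiq hkq hik => by
      refine Finset.sum_eq_zero fun j _ => ?_
      rw [hindlvl i k hi1 hk1 hik j, mul_zero])]
  -- level 0 diagonal term
  have hn0 : (n 0 : ℝ) ≠ 0 := Nat.cast_ne_zero.2 (by omega)
  have hD00 : ∑ j ∈ Finset.range N, a 0 j * a 0 j * covar μ (F 0 j) (F 0 j) = σsq 0 / n 0 := by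
    have hpt : ∀ j ∈ Finset.range N, a 0 j * a 0 j * covar μ (F 0 j) (F 0 j)
        = (if j < n 0 then (n 0 : ℝ)⁻¹ * (n 0 : ℝ)⁻¹ * σsq 0 else 0) := by
      intro j _
      rw [MFMC.covar_self (F 0 j) (hL2 0 j), hvar 0 j]
      by_cases hj : j < n 0
      · simp [ha, MFMC.coeffA, hj]
      · simp [ha, MFMC.coeffA, hj]
    rw [Finset.sum_congr rfl hpt, MFMC.sum_if_const N (n 0) _ (hleN 0 (by omega))]
    field_simp
  rw [hD00]
  congr 1
  refine Finset.sum_congr rfl fun i hi => ?_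
  simp only [Finset.mem_Icc] at hi
  have hi0 : i ≠ 0 := by omega
  have h1eq : i - 1 + 1 = i := by omega
  have him : n (i-1) ≤ n i := by
    have := hmono (i-1) (by omega); rwa [h1eq] at this
  have h0m : n 0 ≤ n (i-1) := hmono' (i-1) (by omega) 0 (by omega)
  have hMN : n i ≤ N := hleN i hi.2
  have hmN : n (i-1) ≤ N := hleN (i-1) (by omega)
  have hM0 : (n i : ℝ) ≠ 0 := Nat.cast_ne_zero.2 (hpos i hi.2).ne'
  have hm0 : (n (i-1) : ℝ) ≠ 0 := Nat.cast_ne_zero.2 (hpos (i-1) (by omega)).ne'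
  have hDii : ∑ j ∈ Finset.range N, a i j * a i j * covar μ (F i j) (F i j)
      = (n i : ℝ) * (c i^2 * ((n i : ℝ)⁻¹)^2 * σsq i)
        + (n (i-1) : ℝ) * (c i^2 * (((n (i-1) : ℝ)⁻¹)^2
            - 2*(n (i-1) : ℝ)⁻¹*(n i : ℝ)⁻¹) * σsq i) := by
    have hpt : ∀ j ∈ Finset.range N, a i j * a i j * covar μ (F i j) (F i j)
        = (if j < n i then c i^2 * ((n i : ℝ)⁻¹)^2 * σsq i else 0)
          + (if j < n (i-1) then c i^2 * (((n (i-1) : ℝ)⁻¹)^2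
              - 2*(n (i-1) : ℝ)⁻¹*(n i : ℝ)⁻¹) * σsq i else 0) := by
      intro j _
      rw [MFMC.covar_self (F i j) (hL2 i j), hvar i j]
      by_cases h1 : j < n (i-1)
      · have h2 : j < n i := lt_of_lt_of_le h1 him
        simp only [ha, MFMC.coeffA, if_neg hi0, if_pos h1, if_pos h2]
        ring
      · by_cases h2 : j < n i
        · simp only [ha, MFMC.coeffA, if_neg hi0, if_neg h1, if_pos h2]
          ring
        · simp only [ha, MFMC.coeffA, if_neg hi0, if_neg h1, if_neg h2]
          ring
    rw [Finset.sum_congr rfl hpt, Finset.sum_add_distrib,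
      MFMC.sum_if_const N (n i) _ hMN, MFMC.sum_if_const N (n (i-1)) _ hmN]
  have hD0i : ∑ j ∈ Finset.range N, a 0 j * a i j * covar μ (F 0 j) (F i j)
      = (n 0 : ℝ) * ((n 0 : ℝ)⁻¹ * (c i * ((n i : ℝ)⁻¹ - (n (i-1) : ℝ)⁻¹)) * σ0i i) := by
    have hpt : ∀ j ∈ Finset.range N, a 0 j * a i j * covar μ (F 0 j) (F i j)
        = (if j < n 0 then (n 0 : ℝ)⁻¹ * (c i * ((n i : ℝ)⁻¹ - (n (i-1) : ℝ)⁻¹)) * σ0i i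
            else 0) := by
      intro j _
      by_cases hj : j < n 0
      · have h1 : j < n (i-1) := lt_of_lt_of_le hj h0m
        have h2 : j < n i := lt_of_lt_of_le hj (le_trans h0m him)
        rw [hcov0 i hi.1 hi.2 j hj]
        simp only [ha, MFMC.coeffA, if_neg hi0]
        simp only [if_true]
        rw [if_pos hj, if_pos h1, if_pos h2, if_pos hj]
      · simp only [ha, MFMC.coeffA, if_true]
        rw [if_neg hi0, if_neg hj]
        simp [hj]
    rw [Finset.sum_congr rfl hpt, MFMC.sum_if_const N (n 0) _ (hleN 0 (by omega))]
  have hDi0 : ∑ j ∈ Finset.range N, a i j * a 0 j * covar μ (F i j) (F 0 j)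
      = ∑ j ∈ Finset.range N, a 0 j * a i j * covar μ (F 0 j) (F i j) := by
    refine Finset.sum_congr rfl fun j _ => ?_
    rw [MFMC.covar_comm]
    ring
  rw [hDii, hDi0, hD0i]
  field_simp
  ring
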